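/- Let i, j ∈ [n] be intervals such that every interval strictly above i is strictly above j and every interval strictly below j is strictly below i (i.e., A(i) ⊆ A(j) and B(j) ⊆ B(i) as sets). Let p ∈ [0,1]^n with p_j > p_i, and let q be p with coordinates i and j exchanged. Then for the worst-case objective V(p) = min_{σ∈Σ} ∑_r p_r·1[σ(r) ≤ k], we have V(q) ≥ V(p). -/

import Mathlib

open Classical

/-- Rankings consistent with strict interval dominance. -/
def FeasiblePerm (n : ℕ) (l u : Fin n → ℝ) : Set (Equiv.Perm (Fin n)) :=
  {σ | ∀ i j : Fin n, l i > u j → σ i < σ j}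

lemma feasible_nonempty (n : ℕ) (l u : Fin n → ℝ) (hvalid : ∀ r : Fin n, l r ≤ u r) :
    ∃ σ, σ ∈ FeasiblePerm n l u := by
  refine ⟨(Tuple.sort u)⁻¹.trans Fin.revPerm, fun a b hab => ?_⟩
  simp only [Equiv.trans_apply, Fin.revPerm_apply]
  rw [Fin.rev_lt_rev]
  by_contra h
  push_neg at h
  have := Tuple.monotone_sort u h
  simp only [Function.comp_apply, ← Equiv.Perm.mul_apply, mul_inv_cancel, Equiv.Perm.one_apply] at this
  exact absurd (lt_of_lt_of_le hab (le_trans (hvalid a) this)) (lt_irrefl _)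

theorem exchange_lemma (n k : ℕ) (l u : Fin n → ℝ)
    (hvalid : ∀ r : Fin n, l r ≤ u r)
    (i j : Fin n)
    (hA : ∀ r : Fin n, l r > u i → l r > u j)
    (hB : ∀ r : Fin n, l j > u r → l i > u r)
    (p : Fin n → ℝ) (hp : ∀ r, 0 ≤ p r ∧ p r ≤ 1) (hpij : p i < p j) :
    sInf {x : ℝ | ∃ σ ∈ FeasiblePerm n l u,
        x = ∑ r ∈ Finset.univ.filter (fun r : Fin n => (σ r : ℕ) < k), p r} ≤
    sInf {x : ℝ | ∃ σ ∈ FeasiblePerm n l u,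
        x = ∑ r ∈ Finset.univ.filter (fun r : Fin n => (σ r : ℕ) < k),
              p (Equiv.swap i j r)} := by
  set Sp := {x : ℝ | ∃ σ ∈ FeasiblePerm n l u,
        x = ∑ r ∈ Finset.univ.filter (fun r : Fin n => (σ r : ℕ) < k), p r} with hSp
  have hij : i ≠ j := fun h => absurd hpij (by rw [h]; exact lt_irrefl _)
  have hbdd : BddBelow Sp := by
    refine ⟨0, fun x hx => ?_⟩
    obtain ⟨σ, -, rfl⟩ := hx
    exact Finset.sum_nonneg fun r _ => (hp r).1
  obtain ⟨σ₀, hσ₀⟩ := feasible_nonempty n l u hvalid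
  refine le_csInf ⟨_, σ₀, hσ₀, rfl⟩ ?_
  rintro x ⟨σ, hσ, rfl⟩
  -- need: sInf Sp ≤ ∑ r ∈ F σ, p (swap i j r)
  by_cases hcross : (σ j : ℕ) < k ∧ ¬ (σ i : ℕ) < k
  · -- use τ = swap ∘ σ
    set τ : Equiv.Perm (Fin n) := (Equiv.swap i j).trans σ with hτ
    have hji : σ j < σ i := by
      rcases lt_or_ge (σ j) (σ i) with h | h
      · exact h
      · exact absurd (lt_of_le_of_lt (Fin.le_def.mp h) hcross.1) hcross.2
    have hτfeas : τ ∈ FeasiblePerm n l u := by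
      intro a b hab
      simp only [hτ, Equiv.trans_apply]
      rcases eq_or_ne i a with rfl | hai
      · rcases eq_or_ne i b with rfl | hbi
        · exact absurd hab (not_lt.mpr (hvalid i))
        rcases eq_or_ne j b with rfl | hbj
        · rw [Equiv.swap_apply_left, Equiv.swap_apply_right]; exact hji
        · rw [Equiv.swap_apply_left, Equiv.swap_apply_of_ne_of_ne (Ne.symm hbi) (Ne.symm hbj)]
          exact lt_trans hji (hσ _ _ hab)
      rcases eq_or_ne j a with rfl | haj
      · rcases eq_or_ne i b with rfl | hbi
        · exact absurd (hB i hab) (not_lt.mpr (hvalid i))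
        rcases eq_or_ne j b with rfl | hbj
        · exact absurd hab (not_lt.mpr (hvalid j))
        · rw [Equiv.swap_apply_right, Equiv.swap_apply_of_ne_of_ne (Ne.symm hbi) (Ne.symm hbj)]
          exact hσ _ _ (hB b hab)
      · rw [Equiv.swap_apply_of_ne_of_ne (Ne.symm hai) (Ne.symm haj)]
        rcases eq_or_ne i b with rfl | hbi
        · rw [Equiv.swap_apply_left]
          exact hσ _ _ (hA a hab)
        rcases eq_or_ne j b with rfl | hbj
        · rw [Equiv.swap_apply_right]
          exact lt_trans (hσ _ _ hab) hji
        · rw [Equiv.swap_apply_of_ne_of_ne (Ne.symm hbi) (Ne.symm hbj)]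
          exact hσ _ _ hab
    have hsum : (∑ r ∈ Finset.univ.filter (fun r : Fin n => (τ r : ℕ) < k), p r)
        = ∑ r ∈ Finset.univ.filter (fun r : Fin n => (σ r : ℕ) < k), p (Equiv.swap i j r) := by
      refine Finset.sum_equiv (Equiv.swap i j) ?_ ?_
      · intro r
        simp only [Finset.mem_filter, Finset.mem_univ, true_and, hτ, Equiv.trans_apply]
      · intro r _
        rw [Equiv.swap_apply_self]
    exact hsum ▸ csInf_le hbdd ⟨τ, hτfeas, rfl⟩
  · -- use τ = σ : show  ∑_F p ≤ ∑_F p∘swap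
    refine le_trans (csInf_le hbdd ⟨σ, hσ, rfl⟩) ?_
    set F := Finset.univ.filter (fun r : Fin n => (σ r : ℕ) < k) with hF
    by_cases hjk : (σ j : ℕ) < k
    · have hik : (σ i : ℕ) < k := by
        by_contra h; exact hcross ⟨hjk, h⟩
      refine le_of_eq (Finset.sum_equiv (Equiv.swap i j) ?_ ?_)
      · intro r
        simp only [hF, Finset.mem_filter, Finset.mem_univ, true_and]
        rcases eq_or_ne i r with rfl | hri
        · rw [Equiv.swap_apply_left]; exact ⟨fun _ => hjk, fun _ => hik⟩
        rcases eq_or_ne j r with rfl | hrj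
        · rw [Equiv.swap_apply_right]; exact ⟨fun _ => hik, fun _ => hjk⟩
        · rw [Equiv.swap_apply_of_ne_of_ne (Ne.symm hri) (Ne.symm hrj)]
      · intro r _; rw [Equiv.swap_apply_self]
    · -- j ∉ F
      have hjF : j ∉ F := by simp [hF, hjk]
      by_cases hik : (σ i : ℕ) < k
      · have hiF : i ∈ F := by simp [hF, hik]
        rw [← Finset.insert_erase hiF, Finset.sum_insert (Finset.notMem_erase _ _),
            Finset.sum_insert (Finset.notMem_erase _ _), Equiv.swap_apply_left]
        have : ∀ r ∈ F.erase i, p (Equiv.swap i j r) = p r := by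
          intro r hr
          have hri : r ≠ i := Finset.ne_of_mem_erase hr
          have hrj : r ≠ j := fun h => hjF (h ▸ Finset.mem_of_mem_erase hr)
          rw [Equiv.swap_apply_of_ne_of_ne hri hrj]
        rw [Finset.sum_congr rfl this]
        exact add_le_add_left (le_of_lt hpij) _
      · have hiF : i ∉ F := by simp [hF, hik]
        refine le_of_eq (Finset.sum_congr rfl ?_).symm
        intro r hr
        have hri : r ≠ i := fun h => hiF (h ▸ hr)
        have hrj : r ≠ j := fun h => hjF (h ▸ hr)
        rw [Equiv.swap_apply_of_ne_of_ne hri hrj]
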